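/- Let G = ⟨R_r, R_r^π⟩ with R_r, R_r^π regular dihedral groups of squarefree order 2k on Ω whose cyclic halves C_r, C_r^π share the orbits F₁, F₂. Suppose F₂ is a single orbit of the point stabilizer G_x for some x ∈ F₁, and suppose cyclic groups of squarefree order are CI^(2) groups. Then there exists β ∈ G^(2) such that R_r^{πβ} = R_r. -/

import Mathlib

universe u

/-- A pair of regular dihedral permutation groups of squarefree order 2k on Ω
whose cyclic index-2 halves share the same two orbits F₁, F₂. -/
structure DihedralPairSetup (Ω : Type*) where
  R₁ : Subgroup (Equiv.Perm Ω)
  R₂ : Subgroup (Equiv.Perm Ω)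
  C₁ : Subgroup (Equiv.Perm Ω)
  C₂ : Subgroup (Equiv.Perm Ω)
  F₁ : Set Ω
  F₂ : Set Ω
  k : ℕ
  k_odd : Odd k
  k_squarefree : Squarefree k
  k_ge : 3 ≤ k
  card_eq : Nat.card Ω = 2 * k
  dih₁ : Nonempty (R₁ ≃* DihedralGroup k)
  dih₂ : Nonempty (R₂ ≃* DihedralGroup k)
  reg₁ : ∀ x y : Ω, ∃! g : R₁, (g : Equiv.Perm Ω) x = y
  reg₂ : ∀ x y : Ω, ∃! g : R₂, (g : Equiv.Perm Ω) x = y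
  hC₁ : C₁ ≤ R₁
  hC₂ : C₂ ≤ R₂
  cyc₁ : IsCyclic C₁
  cyc₂ : IsCyclic C₂
  idx₁ : C₁.relIndex R₁ = 2
  idx₂ : C₂.relIndex R₂ = 2
  union_eq : F₁ ∪ F₂ = Set.univ
  disj : Disjoint F₁ F₂
  ne₁ : F₁.Nonempty
  ne₂ : F₂.Nonempty
  orb₁ : ∀ x ∈ F₁, F₁ = {y : Ω | ∃ g ∈ C₁, g x = y}
  orb₁' : ∀ x ∈ F₂, F₂ = {y : Ω | ∃ g ∈ C₁, g x = y}
  orb₂ : ∀ x ∈ F₁, F₁ = {y : Ω | ∃ g ∈ C₂, g x = y}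
  orb₂' : ∀ x ∈ F₂, F₂ = {y : Ω | ∃ g ∈ C₂, g x = y}

/-- The 2-closure of a permutation group, as a set of permutations agreeing
with some group element on every ordered pair. -/
def twoClosure {Ω : Type*} (G : Subgroup (Equiv.Perm Ω)) : Set (Equiv.Perm Ω) :=
  {β | ∀ x y : Ω, ∃ g ∈ G, β x = g x ∧ β y = g y}

private def rotHom (k : ℕ) : Multiplicative (ZMod k) →* DihedralGroup k :=
  MonoidHom.mk' (fun i => DihedralGroup.r i.toAdd) (by
    intro a b
    simp [DihedralGroup.r_mul_r])

private lemma rotHom_injective (k : ℕ) : Function.Injective (rotHom k) := by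
  intro a b h
  have h' : DihedralGroup.r a.toAdd = DihedralGroup.r b.toAdd := h
  exact Multiplicative.toAdd.injective (DihedralGroup.r.inj h')

private lemma dihedral_facts {Ω : Type*} {R C : Subgroup (Equiv.Perm Ω)} {k : ℕ}
    (hodd : Odd k) (hk3 : 3 ≤ k) (e : R ≃* DihedralGroup k) (hle : C ≤ R)
    (hcard : Nat.card C = k) :
    (∀ t : Equiv.Perm Ω, t ∈ R → t ∉ C → t * t = 1) ∧
    (∀ t : Equiv.Perm Ω, t ∈ R → t ∉ C →
      ∀ c : Equiv.Perm Ω, c ∈ C → t * c * t⁻¹ = c⁻¹) ∧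
    (∀ a b : Equiv.Perm Ω, a ∈ R → b ∈ R → a ∉ C → b ∉ C → a * b ∈ C) := by
  haveI : NeZero k := ⟨by omega⟩
  set Rot : Subgroup (DihedralGroup k) := (rotHom k).range with hRot
  have hmemRot : ∀ g : DihedralGroup k, g ∈ Rot ↔ ∃ i, DihedralGroup.r i = g := by
    intro g
    constructor
    · rintro ⟨m, rfl⟩; exact ⟨m.toAdd, rfl⟩
    · rintro ⟨i, rfl⟩; exact ⟨Multiplicative.ofAdd i, rfl⟩
  have hRotCard : Nat.card Rot = k := by
    rw [Nat.card_congr (MonoidHom.ofInjective (rotHom_injective k)).toEquiv.symm,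
      Nat.card_congr Multiplicative.toAdd, Nat.card_zmod]
  set H : Subgroup (DihedralGroup k) := (C.subgroupOf R).map e.toMonoidHom with hH
  have hHcard : Nat.card H = k := by
    rw [Nat.card_congr ((C.subgroupOf R).equivMapOfInjective e.toMonoidHom
      e.injective).symm.toEquiv,
      Nat.card_congr (Subgroup.subgroupOfEquivOfLe hle).toEquiv, hcard]
  have hHle : H ≤ Rot := by
    intro g hg
    cases g with
    | r i => exact (hmemRot _).mpr ⟨i, rfl⟩
    | sr i =>
      exfalso
      have h2 : orderOf (⟨DihedralGroup.sr i, hg⟩ : H) = 2 := by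
        rw [← orderOf_injective H.subtype H.subtype_injective]
        exact DihedralGroup.orderOf_sr i
      have hdvd := orderOf_dvd_natCard (⟨DihedralGroup.sr i, hg⟩ : H)
      rw [h2, hHcard] at hdvd
      rcases hodd with ⟨m, hm⟩
      omega
  have hHRot : H = Rot := by
    apply SetLike.ext'
    exact Set.eq_of_subset_of_ncard_le hHle (by
      rw [← Nat.card_coe_set_eq, ← Nat.card_coe_set_eq]
      show Nat.card Rot ≤ Nat.card H
      rw [hRotCard, hHcard])
  have hmem : ∀ (t : Equiv.Perm Ω) (ht : t ∈ R),
      t ∈ C ↔ ∃ i, e ⟨t, ht⟩ = DihedralGroup.r i := by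
    intro t ht
    constructor
    · intro h
      have hmemH : e ⟨t, ht⟩ ∈ H := ⟨⟨t, ht⟩, Subgroup.mem_subgroupOf.mpr h, rfl⟩
      rcases (hmemRot _).mp (hHRot ▸ hmemH) with ⟨i, hi⟩
      exact ⟨i, hi.symm⟩
    · rintro ⟨i, hi⟩
      have hmemH : e ⟨t, ht⟩ ∈ H := by
        rw [hHRot, hi]; exact (hmemRot _).mpr ⟨i, rfl⟩
      rcases hmemH with ⟨y, hy, hye⟩
      have hyt : y = ⟨t, ht⟩ := e.injective hye
      rw [hyt] at hy
      exact Subgroup.mem_subgroupOf.mp hy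
  have hsr : ∀ (t : Equiv.Perm Ω) (ht : t ∈ R), t ∉ C →
      ∃ i, e ⟨t, ht⟩ = DihedralGroup.sr i := by
    intro t ht htC
    rcases h : e ⟨t, ht⟩ with i | i
    · exact absurd ((hmem t ht).mpr ⟨i, h⟩) htC
    · exact ⟨i, rfl⟩
  have hsrinv : ∀ i : ZMod k, (DihedralGroup.sr i)⁻¹ = DihedralGroup.sr i := by
    intro i
    apply inv_eq_of_mul_eq_one_right
    rw [DihedralGroup.sr_mul_sr, sub_self]; rfl
  have hrinv : ∀ i : ZMod k, (DihedralGroup.r i)⁻¹ = DihedralGroup.r (-i) := by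
    intro i
    apply inv_eq_of_mul_eq_one_right
    rw [DihedralGroup.r_mul_r, add_neg_cancel]; rfl
  refine ⟨?_, ?_, ?_⟩
  · intro t ht htC
    rcases hsr t ht htC with ⟨i, hi⟩
    have : e (⟨t, ht⟩ * ⟨t, ht⟩) = e 1 := by
      rw [map_mul, hi, map_one, DihedralGroup.sr_mul_sr, sub_self]; rfl
    have h2 : (⟨t, ht⟩ : R) * ⟨t, ht⟩ = 1 := e.injective this
    have h3 := congrArg (Subtype.val) h2
    simpa using h3
  · intro t ht htC c hc
    rcases hsr t ht htC with ⟨i, hi⟩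
    rcases (hmem c (hle hc)).mp hc with ⟨j, hj⟩
    have : e (⟨t, ht⟩ * ⟨c, hle hc⟩ * (⟨t, ht⟩)⁻¹) = e ((⟨c, hle hc⟩ : R)⁻¹) := by
      rw [map_mul, map_mul, map_inv, map_inv, hi, hj, hsrinv, hrinv,
        DihedralGroup.sr_mul_r, DihedralGroup.sr_mul_sr]
      ring_nf
    have h2 := e.injective this
    have h3 := congrArg (Subtype.val) h2
    simpa using h3
  · intro a b ha hb haC hbC
    rcases hsr a ha haC with ⟨i, hi⟩
    rcases hsr b hb hbC with ⟨j, hj⟩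
    have h0 : e (⟨a, ha⟩ * ⟨b, hb⟩) = DihedralGroup.r (j - i) := by
      rw [map_mul, hi, hj, DihedralGroup.sr_mul_sr]
    exact (hmem (a * b) (mul_mem ha hb)).mpr ⟨j - i, h0⟩

private def restrictHom {Ω : Type*} (C : Subgroup (Equiv.Perm Ω)) (F : Set Ω)
    (h : ∀ c : C, ∀ ω : Ω, ω ∈ F ↔ (c : Equiv.Perm Ω) ω ∈ F) : C →* Equiv.Perm F where
  toFun c := Equiv.Perm.subtypePerm (c : Equiv.Perm Ω) (fun ω => (h c ω).symm)
  map_one' := Equiv.ext fun p => Subtype.ext rfl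
  map_mul' c d := Equiv.ext fun p => Subtype.ext rfl

private lemma restrictHom_apply {Ω : Type*} (C : Subgroup (Equiv.Perm Ω)) (F : Set Ω)
    (h : ∀ c : C, ∀ ω : Ω, ω ∈ F ↔ (c : Equiv.Perm Ω) ω ∈ F) (c : C) (p : F) :
    ((restrictHom C F h c) p : Ω) = (c : Equiv.Perm Ω) p := rfl

private lemma perm_apply_inv_self {α : Type*} (f : Equiv.Perm α) (x : α) :
    f (f⁻¹ x) = x := (Equiv.eq_symm_apply f).mp rfl

private lemma perm_inv_apply_self {α : Type*} (f : Equiv.Perm α) (x : α) :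
    f⁻¹ (f x) = x := Equiv.Perm.inv_eq_iff_eq.mpr rfl

/-- If F₂ is a single orbit of the stabilizer G_x (x ∈ F₁), and regular cyclic
groups of squarefree order satisfy the Babai conjugacy (CI^(2)) property, then
R_r^π can be conjugated to R_r by an element of the 2-closure of G. -/
theorem stmt_15 {Ω : Type u} (S : DihedralPairSetup Ω)
    (G : Subgroup (Equiv.Perm Ω)) (hG : G = S.R₁ ⊔ S.R₂)
    (x : Ω) (hx : x ∈ S.F₁)
    (horb : ∃ z₀ : Ω, S.F₂ = {w : Ω | ∃ g ∈ G, g x = x ∧ g z₀ = w})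
    (hCI : ∀ (Δ : Type u) (A B : Subgroup (Equiv.Perm Δ)),
      IsCyclic A → IsCyclic B → Squarefree (Nat.card Δ) →
      (∀ a b : Δ, ∃! g : A, (g : Equiv.Perm Δ) a = b) →
      (∀ a b : Δ, ∃! g : B, (g : Equiv.Perm Δ) a = b) →
      ∃ β ∈ twoClosure (A ⊔ B),
        ∀ g : Equiv.Perm Δ, g ∈ B ↔ β⁻¹ * g * β ∈ A) :
    ∃ β ∈ twoClosure G,
      ∀ g : Equiv.Perm Ω, g ∈ S.R₂ ↔ β⁻¹ * g * β ∈ S.R₁ := by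
  classical
  obtain ⟨e₁⟩ := S.dih₁
  obtain ⟨e₂⟩ := S.dih₂
  obtain ⟨z₀, hz⟩ := horb
  have hΩfin : Finite Ω := Nat.finite_of_card_ne_zero (by
    rw [S.card_eq]; have := S.k_ge; omega)
  have hF2c : S.F₂ = S.F₁ᶜ := by
    ext ω
    constructor
    · intro h2 h1
      exact Set.disjoint_left.mp S.disj h1 h2
    · intro h1
      have hω : ω ∈ S.F₁ ∪ S.F₂ := by rw [S.union_eq]; trivial
      rcases hω with h | h
      · exact absurd h h1
      · exact h
  have hmem2 : ∀ ω, ω ∉ S.F₁ → ω ∈ S.F₂ := fun ω h => by rw [hF2c]; exact h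
  have hnot1 : ∀ ω, ω ∈ S.F₂ → ω ∉ S.F₁ := fun ω h => by rw [hF2c] at h; exact h
  have hnot2 : ∀ ω, ω ∈ S.F₁ → ω ∉ S.F₂ := fun ω h h2 => (hnot1 ω h2) h
  have cp11 : ∀ c ∈ S.C₁, ∀ u ∈ S.F₁, c u ∈ S.F₁ := by
    intro c hc u hu
    rw [S.orb₁ u hu]
    exact ⟨c, hc, rfl⟩
  have cp12 : ∀ c ∈ S.C₁, ∀ u ∈ S.F₂, c u ∈ S.F₂ := by
    intro c hc u hu
    rw [S.orb₁' u hu]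
    exact ⟨c, hc, rfl⟩
  have cp21 : ∀ c ∈ S.C₂, ∀ u ∈ S.F₁, c u ∈ S.F₁ := by
    intro c hc u hu
    rw [S.orb₂ u hu]
    exact ⟨c, hc, rfl⟩
  have cp22 : ∀ c ∈ S.C₂, ∀ u ∈ S.F₂, c u ∈ S.F₂ := by
    intro c hc u hu
    rw [S.orb₂' u hu]
    exact ⟨c, hc, rfl⟩
  have hz₀ : z₀ ∈ S.F₂ := by
    rw [hz]; exact ⟨1, one_mem G, by simp, by simp⟩
  -- cardinalities
  have cardR₁ : Nat.card S.R₁ = 2 * S.k := by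
    have hbij : Function.Bijective (fun g : S.R₁ => (g : Equiv.Perm Ω) x) := by
      constructor
      · intro g g' hgg
        obtain ⟨w, -, hw⟩ := S.reg₁ x ((g : Equiv.Perm Ω) x)
        exact (hw g rfl).trans (hw g' hgg.symm).symm
      · intro y
        obtain ⟨w, hw, -⟩ := S.reg₁ x y
        exact ⟨w, hw⟩
    rw [Nat.card_eq_of_bijective _ hbij, S.card_eq]
  have cardR₂ : Nat.card S.R₂ = 2 * S.k := by
    have hbij : Function.Bijective (fun g : S.R₂ => (g : Equiv.Perm Ω) x) := by
      constructor
      · intro g g' hgg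
        obtain ⟨w, -, hw⟩ := S.reg₂ x ((g : Equiv.Perm Ω) x)
        exact (hw g rfl).trans (hw g' hgg.symm).symm
      · intro y
        obtain ⟨w, hw, -⟩ := S.reg₂ x y
        exact ⟨w, hw⟩
    rw [Nat.card_eq_of_bijective _ hbij, S.card_eq]
  have cardC : ∀ (Cs Rs : Subgroup (Equiv.Perm Ω)), Cs ≤ Rs → Cs.relIndex Rs = 2 →
      Nat.card Rs = 2 * S.k → Nat.card Cs = S.k := by
    intro Cs Rs hle hidx hcard
    have h1 := Subgroup.card_mul_index (Cs.subgroupOf Rs)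
    have h2 : Nat.card (Cs.subgroupOf Rs) = Nat.card Cs :=
      Nat.card_congr (Subgroup.subgroupOfEquivOfLe hle).toEquiv
    have h3 : (Cs.subgroupOf Rs).index = 2 := hidx
    rw [h2, h3, hcard] at h1
    omega
  have cardC₁ := cardC S.C₁ S.R₁ S.hC₁ S.idx₁ cardR₁
  have cardC₂ := cardC S.C₂ S.R₂ S.hC₂ S.idx₂ cardR₂
  have cardF : Nat.card S.F₁ = S.k ∧ Nat.card S.F₂ = S.k := by
    have hsurj1 : Function.Surjective
        (fun c : S.C₁ => (⟨(c : Equiv.Perm Ω) x, cp11 _ c.2 x hx⟩ : S.F₁)) := by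
      rintro ⟨y, hy⟩
      rw [S.orb₁ x hx] at hy
      obtain ⟨g, hg, hgx⟩ := hy
      exact ⟨⟨g, hg⟩, Subtype.ext hgx⟩
    have hsurj2 : Function.Surjective
        (fun c : S.C₁ => (⟨(c : Equiv.Perm Ω) z₀, cp12 _ c.2 z₀ hz₀⟩ : S.F₂)) := by
      rintro ⟨y, hy⟩
      rw [S.orb₁' z₀ hz₀] at hy
      obtain ⟨g, hg, hgx⟩ := hy
      exact ⟨⟨g, hg⟩, Subtype.ext hgx⟩
    have le1 : Nat.card S.F₁ ≤ S.k := by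
      have h := Nat.card_le_card_of_surjective _ hsurj1
      rw [cardC₁] at h
      exact h
    have le2 : Nat.card S.F₂ ≤ S.k := by
      have h := Nat.card_le_card_of_surjective _ hsurj2
      rw [cardC₁] at h
      exact h
    have hsum : Nat.card S.F₁ + Nat.card S.F₂ = 2 * S.k := by
      rw [Nat.card_coe_set_eq, Nat.card_coe_set_eq, hF2c, ← S.card_eq]
      exact Set.ncard_add_ncard_compl S.F₁
    exact ⟨by omega, by omega⟩
  have regular : ∀ (Cs : Subgroup (Equiv.Perm Ω)), Nat.card Cs = S.k →
      (∀ c ∈ Cs, ∀ u ∈ S.F₁, c u ∈ S.F₁) →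
      (∀ u ∈ S.F₁, S.F₁ = {y : Ω | ∃ g ∈ Cs, g u = y}) →
      ∀ u ∈ S.F₁, ∀ v ∈ S.F₁, ∃! c : Cs, (c : Equiv.Perm Ω) u = v := by
    intro Cs hcard hcp horb' u hu v hv
    letI : Fintype Cs := Fintype.ofFinite _
    letI : Fintype S.F₁ := Fintype.ofFinite _
    set f : Cs → S.F₁ := fun c => ⟨(c : Equiv.Perm Ω) u, hcp _ c.2 u hu⟩ with hf
    have hsurj : Function.Surjective f := by
      rintro ⟨y, hy⟩
      rw [horb' u hu] at hy
      obtain ⟨g, hg, hgx⟩ := hy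
      exact ⟨⟨g, hg⟩, Subtype.ext hgx⟩
    have hbij : Function.Bijective f := by
      rw [Fintype.bijective_iff_surjective_and_card]
      refine ⟨hsurj, ?_⟩
      rw [← Nat.card_eq_fintype_card, ← Nat.card_eq_fintype_card, hcard, cardF.1]
    obtain ⟨c, hc⟩ := hsurj ⟨v, hv⟩
    refine ⟨c, congrArg Subtype.val hc, ?_⟩
    intro c' hc'
    exact hbij.1 (Subtype.ext (hc'.trans (congrArg Subtype.val hc).symm))
  have regC₁F₁ := regular S.C₁ cardC₁ cp11 S.orb₁
  have regC₂F₁ := regular S.C₂ cardC₂ cp21 S.orb₂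
  -- restrictions
  have hpres₁ : ∀ c : S.C₁, ∀ ω : Ω, ω ∈ S.F₁ ↔ (c : Equiv.Perm Ω) ω ∈ S.F₁ := by
    intro c ω
    constructor
    · exact fun h => cp11 _ c.2 ω h
    · intro h
      by_contra hω
      exact (hnot1 _ (cp12 _ c.2 ω (hmem2 ω hω))) h
  have hpres₂ : ∀ c : S.C₂, ∀ ω : Ω, ω ∈ S.F₁ ↔ (c : Equiv.Perm Ω) ω ∈ S.F₁ := by
    intro c ω
    constructor
    · exact fun h => cp21 _ c.2 ω h
    · intro h
      by_contra hω
      exact (hnot1 _ (cp22 _ c.2 ω (hmem2 ω hω))) h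
  set r₁h : S.C₁ →* Equiv.Perm S.F₁ := restrictHom S.C₁ S.F₁ hpres₁ with hr₁h
  set r₂h : S.C₂ →* Equiv.Perm S.F₁ := restrictHom S.C₂ S.F₁ hpres₂ with hr₂h
  set A : Subgroup (Equiv.Perm S.F₁) := r₁h.range with hA
  set B : Subgroup (Equiv.Perm S.F₁) := r₂h.range with hB
  haveI := S.cyc₁
  haveI := S.cyc₂
  have cycA : IsCyclic A := isCyclic_of_surjective r₁h.rangeRestrict r₁h.rangeRestrict_surjective
  have cycB : IsCyclic B := isCyclic_of_surjective r₂h.rangeRestrict r₂h.rangeRestrict_surjective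
  have sqf : Squarefree (Nat.card S.F₁) := by rw [cardF.1]; exact S.k_squarefree
  have regA : ∀ a b : S.F₁, ∃! g : A, (g : Equiv.Perm S.F₁) a = b := by
    rintro ⟨a, ha⟩ ⟨b, hb⟩
    obtain ⟨c, hc1, hc2⟩ := regC₁F₁ a ha b hb
    refine ⟨⟨r₁h c, c, rfl⟩, Subtype.ext hc1, ?_⟩
    rintro ⟨g, c', rfl⟩ hgab
    have hc'ab : (c' : Equiv.Perm Ω) a = b := congrArg Subtype.val hgab
    exact Subtype.ext (by rw [hc2 c' hc'ab])
  have regB : ∀ a b : S.F₁, ∃! g : B, (g : Equiv.Perm S.F₁) a = b := by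
    rintro ⟨a, ha⟩ ⟨b, hb⟩
    obtain ⟨c, hc1, hc2⟩ := regC₂F₁ a ha b hb
    refine ⟨⟨r₂h c, c, rfl⟩, Subtype.ext hc1, ?_⟩
    rintro ⟨g, c', rfl⟩ hgab
    have hc'ab : (c' : Equiv.Perm Ω) a = b := congrArg Subtype.val hgab
    exact Subtype.ext (by rw [hc2 c' hc'ab])
  obtain ⟨β₁, hβ₁cl, hβ₁conj⟩ := hCI S.F₁ A B cycA cycB sqf regA regB
  have hβ₁cl' : ∀ p q : S.F₁, ∃ g' ∈ A ⊔ B, β₁ p = g' p ∧ β₁ q = g' q := hβ₁cl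
  -- dihedral structure facts
  obtain ⟨L1₁, L2₁, L3₁⟩ := dihedral_facts S.k_odd S.k_ge e₁ S.hC₁ cardC₁
  obtain ⟨L1₂, L2₂, L3₂⟩ := dihedral_facts S.k_odd S.k_ge e₂ S.hC₂ cardC₂
  -- the half-swapping reflections
  obtain ⟨t₁, ht₁x, -⟩ := S.reg₁ x z₀
  obtain ⟨t₂, ht₂x, -⟩ := S.reg₂ x z₀
  have ht₁C : (t₁ : Equiv.Perm Ω) ∉ S.C₁ := by
    intro h
    exact hnot1 z₀ hz₀ (ht₁x ▸ cp11 _ h x hx)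
  have ht₂C : (t₂ : Equiv.Perm Ω) ∉ S.C₂ := by
    intro h
    exact hnot1 z₀ hz₀ (ht₂x ▸ cp21 _ h x hx)
  have ht₁sq := L1₁ _ t₁.2 ht₁C
  have ht₂sq := L1₂ _ t₂.2 ht₂C
  have ht₁ii : ∀ ω, (t₁ : Equiv.Perm Ω) ((t₁ : Equiv.Perm Ω) ω) = ω := by
    intro ω
    have h := congrArg (fun σ : Equiv.Perm Ω => σ ω) ht₁sq
    simpa using h
  have ht₂ii : ∀ ω, (t₂ : Equiv.Perm Ω) ((t₂ : Equiv.Perm Ω) ω) = ω := by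
    intro ω
    have h := congrArg (fun σ : Equiv.Perm Ω => σ ω) ht₂sq
    simpa using h
  have ht₁conj : ∀ c ∈ S.C₁, ∀ ω,
      (t₁ : Equiv.Perm Ω) (c ω) = c⁻¹ ((t₁ : Equiv.Perm Ω) ω) := by
    intro c hc ω
    have h := congrArg (fun σ : Equiv.Perm Ω => σ ((t₁ : Equiv.Perm Ω) ω))
      (L2₁ _ t₁.2 ht₁C c hc)
    simpa using h
  have ht₂conj : ∀ c ∈ S.C₂, ∀ ω,
      (t₂ : Equiv.Perm Ω) (c ω) = c⁻¹ ((t₂ : Equiv.Perm Ω) ω) := by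
    intro c hc ω
    have h := congrArg (fun σ : Equiv.Perm Ω => σ ((t₂ : Equiv.Perm Ω) ω))
      (L2₂ _ t₂.2 ht₂C c hc)
    simpa using h
  have ht₂comm : ∀ c ∈ S.C₂, ∀ ω, c ((t₂ : Equiv.Perm Ω) ω) = (t₂ : Equiv.Perm Ω) (c⁻¹ ω) := by
    intro c hc ω
    have h := ht₂conj c⁻¹ (inv_mem hc) ω
    rw [inv_inv] at h
    exact h.symm
  have ht₁sw₁ : ∀ u ∈ S.F₁, (t₁ : Equiv.Perm Ω) u ∈ S.F₂ := by
    intro u hu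
    rw [S.orb₁ x hx] at hu
    obtain ⟨c, hc, hcx⟩ := hu
    have h : (t₁ : Equiv.Perm Ω) u = c⁻¹ z₀ := by
      rw [← hcx, ht₁conj c hc x, ht₁x]
    rw [h]
    exact cp12 _ (inv_mem hc) z₀ hz₀
  have ht₁sw₂ : ∀ v ∈ S.F₂, (t₁ : Equiv.Perm Ω) v ∈ S.F₁ := by
    intro v hv
    rw [S.orb₁' z₀ hz₀] at hv
    obtain ⟨c, hc, hcz⟩ := hv
    have hxx : (t₁ : Equiv.Perm Ω) z₀ = x := by rw [← ht₁x, ht₁ii]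
    have h : (t₁ : Equiv.Perm Ω) v = c⁻¹ x := by
      rw [← hcz, ht₁conj c hc z₀, hxx]
    rw [h]
    exact cp11 _ (inv_mem hc) x hx
  have ht₂sw₁ : ∀ u ∈ S.F₁, (t₂ : Equiv.Perm Ω) u ∈ S.F₂ := by
    intro u hu
    rw [S.orb₂ x hx] at hu
    obtain ⟨c, hc, hcx⟩ := hu
    have h : (t₂ : Equiv.Perm Ω) u = c⁻¹ z₀ := by
      rw [← hcx, ht₂conj c hc x, ht₂x]
    rw [h]
    exact cp22 _ (inv_mem hc) z₀ hz₀
  have ht₂sw₂ : ∀ v ∈ S.F₂, (t₂ : Equiv.Perm Ω) v ∈ S.F₁ := by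
    intro v hv
    rw [S.orb₂' z₀ hz₀] at hv
    obtain ⟨c, hc, hcz⟩ := hv
    have hxx : (t₂ : Equiv.Perm Ω) z₀ = x := by rw [← ht₂x, ht₂ii]
    have h : (t₂ : Equiv.Perm Ω) v = c⁻¹ x := by
      rw [← hcz, ht₂conj c hc z₀, hxx]
    rw [h]
    exact cp21 _ (inv_mem hc) x hx
  -- the glued permutation β
  set m₁ : S.F₂ ≃ S.F₁ :=
    { toFun := fun v => ⟨(t₁ : Equiv.Perm Ω) v, ht₁sw₂ v v.2⟩
      invFun := fun u => ⟨(t₁ : Equiv.Perm Ω) u, ht₁sw₁ u u.2⟩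
      left_inv := fun v => Subtype.ext (ht₁ii v)
      right_inv := fun u => Subtype.ext (ht₁ii u) } with hm₁
  set m₂ : S.F₁ ≃ S.F₂ :=
    { toFun := fun u => ⟨(t₂ : Equiv.Perm Ω) u, ht₂sw₁ u u.2⟩
      invFun := fun v => ⟨(t₂ : Equiv.Perm Ω) v, ht₂sw₂ v v.2⟩
      left_inv := fun u => Subtype.ext (ht₂ii u)
      right_inv := fun v => Subtype.ext (ht₂ii v) } with hm₂
  set β₂ : Equiv.Perm S.F₂ := (m₁.trans β₁).trans m₂ with hβ₂def
  obtain ⟨β, hβdef⟩ : ∃ β' : Equiv.Perm Ω,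
      β' = Equiv.Perm.ofSubtype β₁ * Equiv.Perm.ofSubtype β₂ := ⟨_, rfl⟩
  have hβ1 : ∀ ω (h : ω ∈ S.F₁), β ω = ((β₁ ⟨ω, h⟩ : S.F₁) : Ω) := by
    intro ω h
    rw [hβdef, Equiv.Perm.mul_apply,
      Equiv.Perm.ofSubtype_apply_of_not_mem β₂ (hnot2 ω h),
      Equiv.Perm.ofSubtype_apply_of_mem β₁ h]
  have hβ2 : ∀ ω (h : ω ∈ S.F₂), β ω =
      (t₂ : Equiv.Perm Ω) ((β₁ ⟨(t₁ : Equiv.Perm Ω) ω, ht₁sw₂ ω h⟩ : S.F₁) : Ω) := by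
    intro ω h
    rw [hβdef, Equiv.Perm.mul_apply, Equiv.Perm.ofSubtype_apply_of_mem β₂ h,
      Equiv.Perm.ofSubtype_apply_of_not_mem β₁ (hnot1 _ (β₂ ⟨ω, h⟩).2)]
    rfl
  -- membership facts
  have hR₁G : S.R₁ ≤ G := hG ▸ le_sup_left
  have hR₂G : S.R₂ ≤ G := hG ▸ le_sup_right
  have hsupG : ∀ p : Equiv.Perm Ω, p ∈ S.C₁ ⊔ S.C₂ → p ∈ G := by
    intro p hp
    exact (sup_le (le_trans S.hC₁ hR₁G) (le_trans S.hC₂ hR₂G)) hp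
  have SSt : ∀ p : Equiv.Perm Ω, p ∈ S.C₁ ⊔ S.C₂ → ∀ ω, (ω ∈ S.F₁ ↔ p ω ∈ S.F₁) := by
    intro p hp
    rw [Subgroup.sup_eq_closure] at hp
    induction hp using Subgroup.closure_induction with
    | mem y hy =>
      rcases hy with hy | hy
      · exact fun ω => hpres₁ ⟨y, hy⟩ ω
      · exact fun ω => hpres₂ ⟨y, hy⟩ ω
    | one => intro ω; simp
    | mul a b ha hb iha ihb =>
      intro ω
      rw [Equiv.Perm.mul_apply]
      exact (ihb ω).trans (iha (b ω))
    | inv a ha iha =>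
      intro ω
      have h2 := iha (a⁻¹ ω)
      rw [perm_apply_inv_self] at h2
      exact h2.symm
  have LIFT : ∀ g' : Equiv.Perm S.F₁, g' ∈ A ⊔ B →
      ∃ p : Equiv.Perm Ω, p ∈ S.C₁ ⊔ S.C₂ ∧
        ∀ (w : Ω) (hw : w ∈ S.F₁), p w = ((g' ⟨w, hw⟩ : S.F₁) : Ω) := by
    intro g' hg'
    rw [Subgroup.sup_eq_closure] at hg'
    induction hg' using Subgroup.closure_induction with
    | mem y hy =>
      rcases hy with hy | hy
      · obtain ⟨c, rfl⟩ := hy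
        exact ⟨(c : Equiv.Perm Ω), Subgroup.mem_sup_left c.2, fun w hw => rfl⟩
      · obtain ⟨c, rfl⟩ := hy
        exact ⟨(c : Equiv.Perm Ω), Subgroup.mem_sup_right c.2, fun w hw => rfl⟩
    | one => exact ⟨1, one_mem _, fun w hw => rfl⟩
    | mul a b ha hb iha ihb =>
      obtain ⟨p, hp, hpv⟩ := iha
      obtain ⟨q, hq, hqv⟩ := ihb
      refine ⟨p * q, mul_mem hp hq, fun w hw => ?_⟩
      rw [Equiv.Perm.mul_apply, hqv w hw, hpv _ (b ⟨w, hw⟩).2]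
      rfl
    | inv a ha iha =>
      obtain ⟨p, hp, hpv⟩ := iha
      refine ⟨p⁻¹, inv_mem hp, fun w hw => ?_⟩
      have h2 := hpv _ (a⁻¹ ⟨w, hw⟩).2
      have h3 : p ((a⁻¹ ⟨w, hw⟩ : S.F₁) : Ω) = w :=
        h2.trans (congrArg Subtype.val (perm_apply_inv_self a ⟨w, hw⟩))
      rw [Equiv.Perm.inv_eq_iff_eq]
      exact h3.symm
  -- transitivity of the stabiliser of u ∈ F₁ on F₂
  have TRAx : ∀ v ∈ S.F₂, ∀ w ∈ S.F₂, ∃ s : Equiv.Perm Ω, s ∈ G ∧ s x = x ∧ s v = w := by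
    intro v hv w hw
    rw [hz] at hv hw
    obtain ⟨g₁, hg₁G, hg₁x, hg₁z⟩ := hv
    obtain ⟨g₂, hg₂G, hg₂x, hg₂z⟩ := hw
    refine ⟨g₂ * g₁⁻¹, mul_mem hg₂G (inv_mem hg₁G), ?_, ?_⟩
    · rw [Equiv.Perm.mul_apply]
      have h0 : g₁⁻¹ x = x := by rw [Equiv.Perm.inv_eq_iff_eq]; exact hg₁x.symm
      rw [h0, hg₂x]
    · rw [← hg₁z, Equiv.Perm.mul_apply, perm_inv_apply_self, hg₂z]
  have TRA : ∀ u ∈ S.F₁, ∀ v ∈ S.F₂, ∀ w ∈ S.F₂,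
      ∃ s : Equiv.Perm Ω, s ∈ G ∧ s u = u ∧ s v = w := by
    intro u hu v hv w hw
    have hu' := hu
    rw [S.orb₁ x hx] at hu'
    obtain ⟨c, hc, hcx⟩ := hu'
    obtain ⟨s₀, hs₀G, hs₀x, hs₀v⟩ := TRAx (c⁻¹ v) (cp12 _ (inv_mem hc) v hv)
      (c⁻¹ w) (cp12 _ (inv_mem hc) w hw)
    have hcG : c ∈ G := hsupG c (Subgroup.mem_sup_left hc)
    refine ⟨c * s₀ * c⁻¹, mul_mem (mul_mem hcG hs₀G) (inv_mem hcG), ?_, ?_⟩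
    · rw [← hcx, Equiv.Perm.mul_apply, Equiv.Perm.mul_apply, perm_inv_apply_self,
        hs₀x]
    · rw [Equiv.Perm.mul_apply, Equiv.Perm.mul_apply, hs₀v, perm_apply_inv_self]
  -- mixed-pair witnesses
  have key12 : ∀ u, u ∈ S.F₁ → ∀ v, v ∈ S.F₂ → ∃ g, g ∈ G ∧ β u = g u ∧ β v = g v := by
    intro u hu v hv
    obtain ⟨g', hg', h1, h2⟩ := hβ₁cl' ⟨u, hu⟩ ⟨(t₁ : Equiv.Perm Ω) v, ht₁sw₂ v hv⟩
    obtain ⟨p, hp, hpv⟩ := LIFT g' hg'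
    have hpF := SSt p hp
    have hq2 : p⁻¹ ((t₂ : Equiv.Perm Ω) (p ((t₁ : Equiv.Perm Ω) v))) ∈ S.F₂ := by
      apply hmem2
      intro hcon
      have h3 := (hpF _).mp hcon
      rw [perm_apply_inv_self] at h3
      exact hnot1 _ (ht₂sw₁ _ ((hpF _).mp (ht₁sw₂ v hv))) h3
    obtain ⟨s, hsG, hsu, hsv⟩ := TRA u hu v hv _ hq2
    refine ⟨p * s, mul_mem (hsupG p hp) hsG, ?_, ?_⟩
    · rw [hβ1 u hu, h1, Equiv.Perm.mul_apply, hsu, hpv u hu]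
    · rw [hβ2 v hv, h2, Equiv.Perm.mul_apply, hsv, perm_apply_inv_self,
        hpv _ (ht₁sw₂ v hv)]
  -- the conjugation data coming from hCI
  have keyconj : ∀ (c' : S.C₂), ∃ a : S.C₁,
      (∀ p q : S.F₁, (q : Ω) = (a : Equiv.Perm Ω) p →
        ((β₁ q : S.F₁) : Ω) = (c' : Equiv.Perm Ω) (β₁ p : S.F₁)) ∧
      (∀ p q : S.F₁, (q : Ω) = ((a : Equiv.Perm Ω))⁻¹ p →
        ((β₁ q : S.F₁) : Ω) = ((c' : Equiv.Perm Ω))⁻¹ (β₁ p : S.F₁)) := by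
    intro c'
    have hBmem : r₂h c' ∈ B := ⟨c', rfl⟩
    obtain ⟨a, ha⟩ := (hβ₁conj (r₂h c')).mp hBmem
    have h2 : β₁ * r₁h a = r₂h c' * β₁ := by rw [ha]; group
    have h2' : β₁ * (r₁h a)⁻¹ = (r₂h c')⁻¹ * β₁ := by rw [ha]; group
    refine ⟨a, ?_, ?_⟩
    · intro p q hq
      have h3 := congrArg (fun σ : Equiv.Perm S.F₁ => σ p) h2
      simp only [Equiv.Perm.mul_apply] at h3
      have hq' : q = (r₁h a) p := Subtype.ext hq
      rw [hq', congrArg Subtype.val h3]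
      rfl
    · intro p q hq
      have h3 := congrArg (fun σ : Equiv.Perm S.F₁ => σ p) h2'
      simp only [Equiv.Perm.mul_apply] at h3
      have hq' : q = (r₁h a)⁻¹ p := by
        apply Subtype.ext
        rw [hq, ← map_inv]
        rfl
      rw [hq', congrArg Subtype.val h3, ← map_inv]
      rfl
  -- forward direction of the conjugacy statement
  have FWD : ∀ g : Equiv.Perm Ω, g ∈ S.R₂ → β⁻¹ * g * β ∈ S.R₁ := by
    intro g hg
    by_cases hgC : g ∈ S.C₂
    · obtain ⟨a, hK, hK'⟩ := keyconj ⟨g, hgC⟩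
      have claim : g * β = β * (a : Equiv.Perm Ω) := by
        ext ω
        rw [Equiv.Perm.mul_apply, Equiv.Perm.mul_apply]
        by_cases h : ω ∈ S.F₁
        · rw [hβ1 ω h, hβ1 _ (cp11 _ a.2 ω h)]
          exact (hK ⟨ω, h⟩ ⟨(a : Equiv.Perm Ω) ω, cp11 _ a.2 ω h⟩ rfl).symm
        · have h2 := hmem2 ω h
          rw [hβ2 ω h2, hβ2 _ (cp12 _ a.2 ω h2)]
          have e1 : ((t₁ : Equiv.Perm Ω) ((a : Equiv.Perm Ω) ω) : Ω) =
              ((a : Equiv.Perm Ω))⁻¹ ((t₁ : Equiv.Perm Ω) ω) := ht₁conj _ a.2 ω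
          have e2 := hK' ⟨(t₁ : Equiv.Perm Ω) ω, ht₁sw₂ ω h2⟩
            ⟨(t₁ : Equiv.Perm Ω) ((a : Equiv.Perm Ω) ω), ht₁sw₂ _ (cp12 _ a.2 ω h2)⟩ e1
          rw [e2]
          exact ht₂comm g hgC _
      have heq : β⁻¹ * g * β = (a : Equiv.Perm Ω) := by
        rw [mul_assoc, claim, ← mul_assoc, inv_mul_cancel, one_mul]
      rw [heq]
      exact S.hC₁ a.2
    · have hcC : g * (t₂ : Equiv.Perm Ω) ∈ S.C₂ := L3₂ g _ hg t₂.2 hgC ht₂C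
      obtain ⟨a, hK, hK'⟩ := keyconj ⟨g * (t₂ : Equiv.Perm Ω), hcC⟩
      have hgdec : ∀ ω, g ω = (g * (t₂ : Equiv.Perm Ω)) ((t₂ : Equiv.Perm Ω) ω) := by
        intro ω
        rw [Equiv.Perm.mul_apply, ht₂ii]
      have claim : g * β = β * ((a : Equiv.Perm Ω) * (t₁ : Equiv.Perm Ω)) := by
        ext ω
        rw [Equiv.Perm.mul_apply, Equiv.Perm.mul_apply, Equiv.Perm.mul_apply]
        by_cases h : ω ∈ S.F₁
        · have ht₁ω := ht₁sw₁ ω h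
          have haω := cp12 _ a.2 _ ht₁ω
          rw [hβ1 ω h, hβ2 _ haω]
          have e1 : ((t₁ : Equiv.Perm Ω) ((a : Equiv.Perm Ω) ((t₁ : Equiv.Perm Ω) ω)) : Ω) =
              ((a : Equiv.Perm Ω))⁻¹ ω := by
            rw [ht₁conj _ a.2, ht₁ii]
          have e2 := hK' ⟨ω, h⟩ ⟨_, ht₁sw₂ _ haω⟩ e1
          rw [e2, hgdec]
          exact ht₂comm _ hcC _
        · have h2 := hmem2 ω h
          have haω := cp11 _ a.2 _ (ht₁sw₂ ω h2)
          rw [hβ2 ω h2, hβ1 _ haω]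
          have e2 := hK ⟨(t₁ : Equiv.Perm Ω) ω, ht₁sw₂ ω h2⟩ ⟨_, haω⟩ rfl
          rw [e2]
          rfl
      have heq : β⁻¹ * g * β = (a : Equiv.Perm Ω) * (t₁ : Equiv.Perm Ω) := by
        rw [mul_assoc, claim, ← mul_assoc, inv_mul_cancel, one_mul]
      rw [heq]
      exact mul_mem (S.hC₁ a.2) t₁.2
  refine ⟨β, ?_, ?_⟩
  · -- β is in the 2-closure of G
    intro u v
    by_cases hu : u ∈ S.F₁ <;> by_cases hv : v ∈ S.F₁
    · obtain ⟨g', hg', h1, h2⟩ := hβ₁cl' ⟨u, hu⟩ ⟨v, hv⟩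
      obtain ⟨p, hp, hpv⟩ := LIFT g' hg'
      exact ⟨p, hsupG p hp, by rw [hβ1 u hu, h1, hpv u hu],
        by rw [hβ1 v hv, h2, hpv v hv]⟩
    · obtain ⟨g, hgG, h1, h2⟩ := key12 u hu v (hmem2 v hv)
      exact ⟨g, hgG, h1, h2⟩
    · obtain ⟨g, hgG, h1, h2⟩ := key12 v hv u (hmem2 u hu)
      exact ⟨g, hgG, h2, h1⟩
    · have hu2 := hmem2 u hu
      have hv2 := hmem2 v hv
      obtain ⟨g', hg', h1, h2⟩ := hβ₁cl' ⟨(t₁ : Equiv.Perm Ω) u, ht₁sw₂ u hu2⟩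
        ⟨(t₁ : Equiv.Perm Ω) v, ht₁sw₂ v hv2⟩
      obtain ⟨p, hp, hpv⟩ := LIFT g' hg'
      refine ⟨(t₂ : Equiv.Perm Ω) * p * (t₁ : Equiv.Perm Ω),
        mul_mem (mul_mem (hR₂G t₂.2) (hsupG p hp)) (hR₁G t₁.2), ?_, ?_⟩
      · rw [hβ2 u hu2, h1, Equiv.Perm.mul_apply, Equiv.Perm.mul_apply,
          hpv _ (ht₁sw₂ u hu2)]
      · rw [hβ2 v hv2, h2, Equiv.Perm.mul_apply, Equiv.Perm.mul_apply,
          hpv _ (ht₁sw₂ v hv2)]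
  · -- the conjugacy property
    intro g
    refine ⟨fun hg => FWD g hg, fun hg => ?_⟩
    letI : Fintype S.R₁ := Fintype.ofFinite _
    letI : Fintype S.R₂ := Fintype.ofFinite _
    set Φ : S.R₂ → S.R₁ := fun p => ⟨β⁻¹ * (p : Equiv.Perm Ω) * β, FWD _ p.2⟩ with hΦ
    have hinj : Function.Injective Φ := by
      intro p q hpq
      have h1 := congrArg Subtype.val hpq
      simp only [hΦ] at h1
      exact Subtype.ext (mul_left_cancel (mul_right_cancel h1))
    have hbij : Function.Bijective Φ := by
      rw [Fintype.bijective_iff_injective_and_card]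
      exact ⟨hinj, by
        rw [← Nat.card_eq_fintype_card, ← Nat.card_eq_fintype_card, cardR₂, cardR₁]⟩
    obtain ⟨p, hp⟩ := hbij.2 ⟨β⁻¹ * g * β, hg⟩
    have h1 := congrArg Subtype.val hp
    simp only [hΦ] at h1
    have hgp : (p : Equiv.Perm Ω) = g := mul_left_cancel (mul_right_cancel h1)
    rw [← hgp]
    exact p.2
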